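/- Fix λ > 0. There exists θ_1 > 0 such that for all sufficiently large n and every c ≤ 0, ∑_{i=0}^{n-1} (e^{-c} log n / n)^{e^λ (1-λ/n)^i} ≥ e^{-c(1-o(1))} · θ_1; in particular one may take θ_1 = e^{-λ}, with the sum bounded below by e^{-λ}·(e^{-c})^{1-o(1)} where the o(1) is uniform in c ≤ 0. -/

import Mathlib

open Filter Real Finset

set_option maxHeartbeats 1000000

/-- Lower bound for the key sum, uniformly over `c ≤ 0`:
`∑_{i=0}^{n-1} (e^{-c} log n / n)^{e^λ (1-λ/n)^i} ≥ e^{-c(1-o(1))} · e^{-λ}`. -/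
theorem sum_rpow_lower_bound (l : ℝ) (hl : 0 < l) :
    ∃ ε : ℕ → ℝ, Tendsto ε atTop (nhds 0) ∧
      ∀ᶠ n : ℕ in atTop, ∀ c : ℝ, c ≤ 0 →
        Real.exp (-c * (1 - ε n)) * Real.exp (-l) ≤
          ∑ i ∈ Finset.range n,
            (Real.exp (-c) * Real.log n / n) ^ (Real.exp l * (1 - l / n) ^ (i : ℕ)) := by
  refine ⟨fun n => 1 - min 1 (Real.exp l * (1 - l / n) ^ (n - 1)), ?_, ?_⟩
  · -- the error tends to zero
    have h1 : Tendsto (fun n : ℕ => (1 - l / n) ^ n) atTop (nhds (Real.exp (-l))) := by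
      have := Real.tendsto_one_add_div_pow_exp (-l)
      simpa [sub_eq_add_neg, neg_div] using this
    have h2 : Tendsto (fun n : ℕ => (1 - l / (n : ℝ))) atTop (nhds 1) := by
      have h0 : Tendsto (fun n : ℕ => l / (n : ℝ)) atTop (nhds 0) :=
        tendsto_const_nhds.div_atTop tendsto_natCast_atTop_atTop
      simpa using tendsto_const_nhds.sub h0
    have h3 : Tendsto (fun n : ℕ => (1 - l / n) ^ (n - 1)) atTop (nhds (Real.exp (-l))) := by
      have hd := h1.div h2 one_ne_zero
      rw [div_one] at hd
      refine hd.congr' ?_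
      filter_upwards [eventually_gt_atTop ⌈l⌉₊, eventually_ge_atTop 1] with n hn hn1
      have hnl : l < (n : ℝ) := lt_of_le_of_lt (Nat.le_ceil l) (by exact_mod_cast hn)
      have hn0 : (0 : ℝ) < n := lt_trans hl hnl
      have hne : 1 - l / n ≠ 0 := by
        have : l / n < 1 := (div_lt_one hn0).mpr hnl
        linarith
      have : (1 - l / (n:ℝ)) ^ n = (1 - l / n) ^ (n - 1) * (1 - l / n) := by
        rw [← pow_succ, Nat.sub_add_cancel hn1]
      simp only [Pi.div_apply]
      rw [this, mul_div_assoc, div_self hne, mul_one]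
    have hf : Tendsto (fun n : ℕ => Real.exp l * (1 - l / n) ^ (n - 1)) atTop (nhds 1) := by
      have := (tendsto_const_nhds (x := Real.exp l) (f := atTop (α := ℕ))).mul h3
      rwa [← Real.exp_add, add_neg_cancel, Real.exp_zero] at this
    have hmin : Tendsto (fun n : ℕ => min 1 (Real.exp l * (1 - l / n) ^ (n - 1)))
        atTop (nhds 1) := by
      have := (tendsto_const_nhds (x := (1:ℝ)) (f := atTop (α := ℕ))).min hf
      simpa using this
    have := (tendsto_const_nhds (x := (1:ℝ)) (f := atTop (α := ℕ))).sub hmin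
    simpa using this
  · -- the main eventual bound
    have hBr : ∀ᶠ x : ℝ in atTop, (Real.log x) ^ 2 ≤ x := by
      have h := (isLittleO_log_rpow_atTop (by norm_num : (0:ℝ) < 1/2)).def
        (by norm_num : (0:ℝ) < 1)
      filter_upwards [h, eventually_ge_atTop (1:ℝ)] with x hx hx1
      have hx0 : (0:ℝ) ≤ x := by linarith
      rw [Real.norm_eq_abs, Real.norm_eq_abs, one_mul,
        abs_of_nonneg (Real.rpow_nonneg hx0 _)] at hx
      have h2 : (Real.log x) ^ 2 ≤ (x ^ (1/2 : ℝ)) ^ 2 := by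
        calc (Real.log x) ^ 2 = |Real.log x| ^ 2 := (sq_abs _).symm
        _ ≤ (x ^ (1/2 : ℝ)) ^ 2 := pow_le_pow_left₀ (abs_nonneg _) hx 2
      calc (Real.log x) ^ 2 ≤ (x ^ (1/2 : ℝ)) ^ 2 := h2
      _ = x := by
          rw [← Real.rpow_natCast (x ^ (1/2:ℝ)) 2, ← Real.rpow_mul hx0]
          norm_num
    have hB : ∀ᶠ n : ℕ in atTop, (Real.log n) ^ 2 ≤ (n : ℝ) :=
      tendsto_natCast_atTop_atTop.eventually hBr
    have hA : ∀ᶠ n : ℕ in atTop, l + 1 ≤ Real.log (Real.log n) :=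
      (Real.tendsto_log_atTop.comp
        (Real.tendsto_log_atTop.comp tendsto_natCast_atTop_atTop)).eventually_ge_atTop (l + 1)
    have hC : ∀ᶠ n : ℕ in atTop, 2 * l + 2 ≤ (n : ℝ) :=
      tendsto_natCast_atTop_atTop.eventually_ge_atTop (2 * l + 2)
    filter_upwards [hA, hB, hC, eventually_ge_atTop 3] with n hA hB hC hD c hc
    -- notation
    obtain ⟨L, hLdef⟩ : ∃ x : ℝ, x = Real.log n := ⟨_, rfl⟩
    obtain ⟨M, hMdef⟩ : ∃ x : ℝ, x = Real.log L := ⟨_, rfl⟩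
    have hn0 : (0:ℝ) < n := by positivity
    rw [← hLdef] at hB hA
    rw [← hMdef] at hA
    have hn3 : (3:ℝ) ≤ n := by exact_mod_cast hD
    have hL1 : 1 ≤ L := by
      rw [hLdef, Real.le_log_iff_exp_le hn0]
      calc Real.exp 1 ≤ 2.7182818286 := Real.exp_one_lt_d9.le
      _ ≤ (n:ℝ) := by linarith
    have hL0 : 0 < L := lt_of_lt_of_le one_pos hL1
    have hM1 : 1 ≤ M := le_trans (by linarith) hA
    have hLM : M + 1 ≤ L := by
      have h1 : M + 1 ≤ Real.exp M := Real.add_one_le_exp M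
      rw [hMdef, Real.exp_log hL0] at h1
      rw [hMdef]
      exact h1
    obtain ⟨δ, hδdef⟩ : ∃ x : ℝ, x = l / (L - M) := ⟨_, rfl⟩
    have hLMpos : (0:ℝ) < L - M := by linarith
    have hδpos : 0 < δ := hδdef ▸ div_pos hl hLMpos
    have hδl : δ ≤ l := by
      rw [hδdef]
      calc l / (L - M) ≤ l / 1 := by
            apply div_le_div_of_nonneg_left hl.le one_pos; linarith
      _ = l := div_one l
    have h1δ : (0:ℝ) < 1 + δ := by linarith
    -- key inequality : l/L + l/n ≤ log (1+δ)
    have hlogδ : Real.log (1 + δ) ≥ δ / (1 + δ) := by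
      have h := Real.log_le_sub_one_of_pos (show (0:ℝ) < 1 / (1 + δ) by positivity)
      rw [one_div, Real.log_inv] at h
      have : Real.log (1 + δ) ≥ 1 - (1 + δ)⁻¹ := by linarith
      calc δ / (1 + δ) = 1 - (1 + δ)⁻¹ := by field_simp; ring
      _ ≤ Real.log (1 + δ) := this
    have hkey : l / L + l / n ≤ Real.log (1 + δ) := by
      have hδeq : δ / (1 + δ) = l / (L - M + l) := by
        rw [hδdef]
        field_simp
        try ring
      have hstep : l / L + l / n ≤ l / (L - M + l) := by
        have hL1' : (0:ℝ) < L - 1 := by linarith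
        have h1 : 1 / L + 1 / (n:ℝ) ≤ 1 / L + 1 / L ^ 2 := by
          have hL2 : (0:ℝ) < L ^ 2 := by positivity
          gcongr
        have h2 : 1 / L + 1 / L ^ 2 ≤ 1 / (L - 1) := by
          rw [div_add_div _ _ (ne_of_gt hL0) (ne_of_gt (by positivity : (0:ℝ) < L ^ 2)),
            div_le_div_iff₀ (by positivity) hL1']
          nlinarith
        have h3 : 1 / (L - 1) ≤ 1 / (L - M + l) := by
          apply one_div_le_one_div_of_le (by linarith) (by linarith)
        calc l / L + l / n = l * (1 / L + 1 / n) := by ring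
        _ ≤ l * (1 / (L - M + l)) := by
            apply mul_le_mul_of_nonneg_left _ hl.le
            calc 1 / L + 1 / (n:ℝ) ≤ 1 / L + 1 / L ^ 2 := h1
            _ ≤ 1 / (L - 1) := h2
            _ ≤ 1 / (L - M + l) := h3
        _ = l / (L - M + l) := by ring
      calc l / L + l / n ≤ l / (L - M + l) := hstep
      _ = δ / (1 + δ) := hδeq.symm
      _ ≤ Real.log (1 + δ) := hlogδ
    have hlogδ0 : 0 ≤ Real.log (1 + δ) := Real.log_nonneg (by linarith)
    have hlogδl : Real.log (1 + δ) ≤ l :=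
      le_trans (by linarith [Real.log_le_sub_one_of_pos h1δ]) hδl
    obtain ⟨r, hrdef⟩ : ∃ x : ℝ, x = 1 - Real.log (1 + δ) / l := ⟨_, rfl⟩
    have hr0 : 0 ≤ r := by
      rw [hrdef]
      have : Real.log (1 + δ) / l ≤ 1 := (div_le_one hl).mpr hlogδl
      linarith
    have hr1 : r ≤ 1 := by
      rw [hrdef]
      have : 0 ≤ Real.log (1 + δ) / l := div_nonneg hlogδ0 hl.le
      linarith
    obtain ⟨i₀, hi₀def⟩ : ∃ x : ℕ, x = ⌈(n:ℝ) * r⌉₊ := ⟨_, rfl⟩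
    have hnr0 : (0:ℝ) ≤ (n:ℝ) * r := mul_nonneg hn0.le hr0
    have hone_sub_r : (n:ℝ) * (1 - r) = (n:ℝ) * Real.log (1 + δ) / l := by
      rw [hrdef]; field_simp; ring
    have hnr_ge : (n:ℝ) / L + 1 ≤ (n:ℝ) * (1 - r) := by
      rw [hone_sub_r]
      have : (n:ℝ) * (l / L + l / n) ≤ (n:ℝ) * Real.log (1 + δ) :=
        mul_le_mul_of_nonneg_left hkey hn0.le
      have hexp : (n:ℝ) * (l / L + l / n) = ((n:ℝ) / L + 1) * l := by
        field_simp
        try ring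
      rw [hexp] at this
      rw [le_div_iff₀ hl]
      linarith
    have hexpand : (n:ℝ) * (1 - r) = (n:ℝ) - (n:ℝ) * r := by ring
    have hi₀lt : i₀ < n := by
      have h1 : (i₀ : ℝ) < (n:ℝ) * r + 1 := by
        rw [hi₀def]; exact Nat.ceil_lt_add_one hnr0
      have h2 : (n:ℝ) * r + 1 ≤ (n:ℝ) := by
        have hpos : (0:ℝ) < (n:ℝ) / L := by positivity
        linarith
      exact_mod_cast lt_of_lt_of_le h1 h2
    -- cardinality bound
    have hcard : (1:ℝ) ≤ ((n - i₀ : ℕ) : ℝ) * (L / n) := by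
      have hcast : ((n - i₀ : ℕ) : ℝ) = (n:ℝ) - (i₀:ℝ) := by
        rw [Nat.cast_sub hi₀lt.le]
      have h1 : (i₀ : ℝ) < (n:ℝ) * r + 1 := by
        rw [hi₀def]; exact Nat.ceil_lt_add_one hnr0
      have h2 : (n:ℝ) / L ≤ (n:ℝ) - (i₀:ℝ) := by linarith
      rw [hcast]
      calc (1:ℝ) = ((n:ℝ) / L) * (L / n) := by field_simp
      _ ≤ ((n:ℝ) - (i₀:ℝ)) * (L / n) := by
          apply mul_le_mul_of_nonneg_right h2 (by positivity)
    -- base facts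
    have hln1 : l / (n:ℝ) ≤ 1 / 2 := by
      rw [div_le_div_iff₀ hn0 two_pos]; linarith
    have hq0 : (0:ℝ) ≤ 1 - l / n := by linarith
    have hq1 : 1 - l / (n:ℝ) ≤ 1 := by
      have : 0 ≤ l / (n:ℝ) := by positivity
      linarith
    have ht0 : (0:ℝ) < L / n := by positivity
    have ht1 : L / (n:ℝ) ≤ 1 := by
      rw [div_le_one hn0]
      have := Real.log_le_sub_one_of_pos hn0
      linarith
    -- (L/n)^δ = exp (-l)
    have htδ : (L / (n:ℝ)) ^ (δ : ℝ) = Real.exp (-l) := by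
      rw [Real.rpow_def_of_pos ht0, Real.log_div (ne_of_gt hL0) (ne_of_gt hn0)]
      congr 1
      have hne : L - M ≠ 0 := ne_of_gt hLMpos
      rw [← hLdef, ← hMdef, hδdef]
      field_simp
      ring
    have ht1δ : (L / (n:ℝ)) ^ ((1:ℝ) + δ) = (L / n) * Real.exp (-l) := by
      rw [Real.rpow_add ht0, Real.rpow_one, htδ]
    -- per-term lower bound on the set Ico i₀ n
    have hterm : ∀ i ∈ Finset.Ico i₀ n,
        Real.exp (-c * (1 - (1 - min 1 (Real.exp l * (1 - l / n) ^ (n - 1))))) *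
          ((L / n) * Real.exp (-l)) ≤
        (Real.exp (-c) * Real.log n / n) ^ (Real.exp l * (1 - l / n) ^ (i : ℕ)) := by
      intro i hi
      rw [Finset.mem_Ico] at hi
      obtain ⟨hi1, hi2⟩ := hi
      set p := Real.exp l * (1 - l / (n:ℝ)) ^ (i : ℕ) with hpdef
      -- upper bound on p
      have hup : p ≤ 1 + δ := by
        have s1 : (1 - l / (n:ℝ)) ^ i ≤ (1 - l / n) ^ i₀ :=
          pow_le_pow_of_le_one hq0 hq1 hi1
        have s2 : (1 - l / (n:ℝ)) ^ i₀ ≤ (Real.exp (-(l / n))) ^ i₀ := by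
          apply pow_le_pow_left₀ hq0
          have := Real.add_one_le_exp (-(l / (n:ℝ)))
          linarith
        have s3 : (Real.exp (-(l / (n:ℝ)))) ^ i₀ = Real.exp ((i₀ : ℝ) * -(l / n)) := by
          rw [Real.exp_nat_mul]
        have s4 : Real.exp ((i₀ : ℝ) * -(l / (n:ℝ))) ≤ Real.exp (-(r * l)) := by
          rw [Real.exp_le_exp]
          have hle : (n:ℝ) * r ≤ (i₀ : ℝ) := by rw [hi₀def]; exact Nat.le_ceil _
          rw [mul_neg]
          apply neg_le_neg
          calc r * l = ((n:ℝ) * r) * (l / n) := by field_simp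
          _ ≤ (i₀:ℝ) * (l / n) := by
              apply mul_le_mul_of_nonneg_right hle (by positivity)
        have : p ≤ Real.exp l * Real.exp (-(r * l)) := by
          rw [hpdef]
          apply mul_le_mul_of_nonneg_left _ (Real.exp_pos l).le
          calc (1 - l / (n:ℝ)) ^ i ≤ (1 - l / n) ^ i₀ := s1
          _ ≤ (Real.exp (-(l / n))) ^ i₀ := s2
          _ = Real.exp ((i₀ : ℝ) * -(l / n)) := s3
          _ ≤ Real.exp (-(r * l)) := s4
        calc p ≤ Real.exp l * Real.exp (-(r * l)) := this
        _ = Real.exp (l - r * l) := by rw [← Real.exp_add, sub_eq_add_neg]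
        _ = Real.exp (Real.log (1 + δ)) := by
            congr 1
            rw [hrdef]
            field_simp
            try ring
        _ = 1 + δ := Real.exp_log h1δ
      -- lower bound on p
      have hlo : min 1 (Real.exp l * (1 - l / (n:ℝ)) ^ (n - 1)) ≤ p := by
        have s1 : (1 - l / (n:ℝ)) ^ (n - 1) ≤ (1 - l / n) ^ i :=
          pow_le_pow_of_le_one hq0 hq1 (Nat.le_sub_one_of_lt hi2)
        calc min 1 (Real.exp l * (1 - l / (n:ℝ)) ^ (n - 1))
            ≤ Real.exp l * (1 - l / n) ^ (n - 1) := min_le_right _ _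
        _ ≤ p := mul_le_mul_of_nonneg_left s1 (Real.exp_pos l).le
      have hp0 : 0 ≤ p := by
        rw [hpdef]; positivity
      -- rewrite the term
      have hbase : Real.exp (-c) * Real.log (n:ℝ) / n = Real.exp (-c) * (L / n) := by
        rw [mul_div_assoc, ← hLdef]
      rw [hbase, Real.mul_rpow (Real.exp_pos _).le ht0.le,
        Real.rpow_def_of_pos (Real.exp_pos _), Real.log_exp]
      have hexp_le : Real.exp (-c * (1 - (1 - min 1 (Real.exp l * (1 - l / n) ^ (n - 1))))) ≤
          Real.exp (-c * p) := by
        rw [Real.exp_le_exp, sub_sub_cancel]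
        exact mul_le_mul_of_nonneg_left hlo (by linarith)
      have hpow_le : (L / (n:ℝ)) * Real.exp (-l) ≤ (L / n) ^ p := by
        rw [← ht1δ]
        exact Real.rpow_le_rpow_of_exponent_ge ht0 ht1 hup
      calc Real.exp (-c * (1 - (1 - min 1 (Real.exp l * (1 - l / n) ^ (n - 1))))) *
            ((L / n) * Real.exp (-l))
          ≤ Real.exp (-c * p) * ((L / n) ^ p) := by
            apply mul_le_mul hexp_le hpow_le (by positivity) (Real.exp_pos _).le
      _ = Real.exp (-c * p) * (L / n) ^ p := rfl
    -- assemble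
    set E := Real.exp (-c * (1 - (1 - min 1 (Real.exp l * (1 - l / (n:ℝ)) ^ (n - 1))))) with hEdef
    have hE0 : 0 < E := Real.exp_pos _
    calc E * Real.exp (-l)
        ≤ ((n - i₀ : ℕ) : ℝ) * (L / n) * (E * Real.exp (-l)) := by
          nlinarith [mul_pos hE0 (Real.exp_pos (-l)), hcard]
    _ = ∑ _i ∈ Finset.Ico i₀ n, (E * ((L / n) * Real.exp (-l))) := by
        rw [Finset.sum_const, Nat.card_Ico, nsmul_eq_mul]
        ring
    _ ≤ ∑ i ∈ Finset.Ico i₀ n,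
          (Real.exp (-c) * Real.log n / n) ^ (Real.exp l * (1 - l / n) ^ (i : ℕ)) :=
        Finset.sum_le_sum hterm
    _ ≤ ∑ i ∈ Finset.range n,
          (Real.exp (-c) * Real.log n / n) ^ (Real.exp l * (1 - l / n) ^ (i : ℕ)) := by
        apply Finset.sum_le_sum_of_subset_of_nonneg
        · rw [Finset.range_eq_Ico]
          exact Finset.Ico_subset_Ico (Nat.zero_le _) le_rfl
        · intro i _ _
          positivity
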